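/- Let (X, μ) be a probability space, T : X → X a measure-preserving map, and f a measurable function with |f| ≤ C μ-almost everywhere. Let ε, δ > 0, let p ≥ 1 be a natural number with ‖A_p f‖₁ ≤ δε/2, and let n₀ ≥ 1 be a natural number with n₀ ≥ 4(p−1)C/δ. Then μ({x : ∃ n ≥ n₀, |Aₙ f(x)| > δ}) ≤ ε. -/

import Mathlib

set_option linter.unusedSectionVars false
set_option linter.unusedVariables false
set_option maxHeartbeats 1000000

open MeasureTheory Finset

/-- The `n`-th Birkhoff average of `f` along `T`: `Aₙ f = (1/n) ∑_{i<n} f ∘ T^i`. -/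
noncomputable def birkhoffAvg {X : Type*} (T : X → X) (f : X → ℝ) (n : ℕ) (x : X) : ℝ :=
  (n : ℝ)⁻¹ * ∑ i ∈ Finset.range n, f (T^[i] x)


section Garsia
variable {X : Type*} [MeasurableSpace X]

/-- running maximum of Birkhoff sums, `maxS T h N x = max (0, max_{1≤k≤N} S_k h x)`. -/
noncomputable def maxS (T : X → X) (h : X → ℝ) : ℕ → X → ℝ
  | 0 => fun _ => 0
  | (N+1) => fun x => max (maxS T h N x) (birkhoffSum T h (N+1) x)

lemma maxS_nonneg (T : X → X) (h : X → ℝ) (N : ℕ) (x : X) : 0 ≤ maxS T h N x := by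
  induction N with
  | zero => simp [maxS]
  | succ N ih => exact le_trans ih (le_max_left _ _)

lemma le_maxS (T : X → X) (h : X → ℝ) {k N : ℕ} (hk : k ≤ N) (x : X) :
    birkhoffSum T h k x ≤ maxS T h N x := by
  induction N with
  | zero =>
    interval_cases k
    simpa [birkhoffSum] using maxS_nonneg T h 0 x
  | succ N ih =>
    rcases Nat.lt_or_ge k (N+1) with hlt | hge
    · exact le_trans (ih (Nat.lt_succ_iff.mp hlt)) (le_max_left _ _)
    · have : k = N+1 := le_antisymm hk hge
      subst this
      exact le_max_right _ _

lemma maxS_le_max (T : X → X) (h : X → ℝ) (N : ℕ) (x : X) :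
    maxS T h N x ≤ max 0 (h x + maxS T h N (T x)) := by
  induction N with
  | zero => simp [maxS]
  | succ N ih =>
    refine max_le ?_ ?_
    · refine le_trans ih (max_le_max le_rfl ?_)
      exact add_le_add le_rfl (le_max_left _ _)
    · refine le_trans ?_ (le_max_right _ _)
      rw [birkhoffSum_succ']
      exact add_le_add le_rfl (le_maxS T h (Nat.le_succ N) (T x))

lemma maxS_nonpos (T : X → X) (h : X → ℝ) (N : ℕ) (x : X)
    (H : ∀ k, 1 ≤ k → k ≤ N → birkhoffSum T h k x ≤ 0) : maxS T h N x = 0 := by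
  induction N with
  | zero => rfl
  | succ N ih =>
    show max _ _ = 0
    rw [ih (fun k h1 h2 => H k h1 (h2.trans (Nat.le_succ N)))]
    rw [max_eq_left (H (N+1) (Nat.le_add_left 1 N) le_rfl)]

lemma measurable_birkhoffSum {T : X → X} (hTm : Measurable T) {h : X → ℝ} (hm : Measurable h)
    (n : ℕ) : Measurable (birkhoffSum T h n) := by
  unfold birkhoffSum
  exact Finset.measurable_sum _ fun i _ => hm.comp (hTm.iterate i)

lemma measurable_maxS {T : X → X} (hTm : Measurable T) {h : X → ℝ} (hm : Measurable h)
    (N : ℕ) : Measurable (maxS T h N) := by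
  induction N with
  | zero => exact measurable_const
  | succ N ih => exact ih.max (measurable_birkhoffSum hTm hm (N+1))

lemma integrable_comp_iterate {μ : Measure X} {T : X → X} (hT : MeasurePreserving T μ μ)
    {h : X → ℝ} (hm : Measurable h) (hint : Integrable h μ) (k : ℕ) :
    Integrable (fun x => h (T^[k] x)) μ := by
  have : MeasurePreserving (T^[k]) μ μ := hT.iterate k
  exact (this.integrable_comp hm.aestronglyMeasurable).mpr hint

lemma integrable_birkhoffSum {μ : Measure X} {T : X → X} (hT : MeasurePreserving T μ μ)
    {h : X → ℝ} (hm : Measurable h) (hint : Integrable h μ) (n : ℕ) :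
    Integrable (birkhoffSum T h n) μ := by
  unfold birkhoffSum
  exact integrable_finset_sum _ fun i _ => integrable_comp_iterate hT hm hint i

lemma integrable_maxS {μ : Measure X} {T : X → X} (hT : MeasurePreserving T μ μ)
    {h : X → ℝ} (hm : Measurable h) (hint : Integrable h μ) (N : ℕ) :
    Integrable (maxS T h N) μ := by
  induction N with
  | zero => exact integrable_zero X ℝ μ
  | succ N ih =>
    have := ih.sup (integrable_birkhoffSum hT hm hint (N+1))
    simpa [Pi.sup_def, maxS] using this

end Garsia
section Garsia2
variable {X : Type*} [MeasurableSpace X]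

lemma garsia {μ : Measure X} [IsProbabilityMeasure μ] {T : X → X}
    (hT : MeasurePreserving T μ μ) {h : X → ℝ} (hm : Measurable h) (hint : Integrable h μ) :
    0 ≤ ∫ x in {x | ∃ n, 1 ≤ n ∧ 0 < birkhoffSum T h n x}, h x ∂μ := by
  set E : ℕ → Set X := fun N => {x | ∃ k, 1 ≤ k ∧ k ≤ N ∧ 0 < birkhoffSum T h k x} with hE
  have hEmeas : ∀ N, MeasurableSet (E N) := by
    intro N
    have : E N = ⋃ k, {x | (1 ≤ k ∧ k ≤ N) ∧ 0 < birkhoffSum T h k x} := by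
      ext x; simp [hE]; tauto
    rw [this]
    refine MeasurableSet.iUnion fun k => ?_
    rcases Classical.em (1 ≤ k ∧ k ≤ N) with hk | hk
    · simp only [hk, true_and]
      exact measurableSet_lt measurable_const (measurable_birkhoffSum hT.measurable hm k)
    · simp only [hk, false_and]; exact MeasurableSet.empty
  -- step A : each ∫_{E N} h ≥ 0
  have stepA : ∀ N, 0 ≤ ∫ x in E N, h x ∂μ := by
    intro N
    have hMint : Integrable (maxS T h N) μ := integrable_maxS hT hm hint N
    have hMTint : Integrable (fun x => maxS T h N (T x)) μ :=
      (hT.integrable_comp (measurable_maxS hT.measurable hm N).aestronglyMeasurable).mpr hMint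
    -- pointwise on E N : maxS N x - maxS N (T x) ≤ h x
    have hpt : ∀ x ∈ E N, maxS T h N x - maxS T h N (T x) ≤ h x := by
      rintro x ⟨k, hk1, hkN, hkpos⟩
      have hpos : 0 < maxS T h N x := lt_of_lt_of_le hkpos (le_maxS T h hkN x)
      have hle := maxS_le_max T h N x
      have : maxS T h N x ≤ h x + maxS T h N (T x) := by
        rcases le_max_iff.mp hle with h0 | h1
        · linarith
        · exact h1
      linarith
    have h1 : ∫ x in E N, (maxS T h N x - maxS T h N (T x)) ∂μ ≤ ∫ x in E N, h x ∂μ := by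
      refine setIntegral_mono_on ((hMint.sub hMTint).integrableOn) (hint.integrableOn)
        (hEmeas N) hpt
    have h2 : ∫ x in E N, (maxS T h N x - maxS T h N (T x)) ∂μ
        = ∫ x in E N, maxS T h N x ∂μ - ∫ x in E N, maxS T h N (T x) ∂μ :=
      integral_sub hMint.integrableOn hMTint.integrableOn
    have h3 : ∫ x in E N, maxS T h N (T x) ∂μ ≤ ∫ x, maxS T h N (T x) ∂μ :=
      setIntegral_le_integral hMTint
        (Filter.Eventually.of_forall fun x => maxS_nonneg T h N (T x))
    have h4 : ∫ x, maxS T h N (T x) ∂μ = ∫ x, maxS T h N x ∂μ := by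
      rw [← integral_map hT.measurable.aemeasurable
        (measurable_maxS hT.measurable hm N).aestronglyMeasurable, hT.map_eq]
    have h5 : ∫ x in E N, maxS T h N x ∂μ + ∫ x in (E N)ᶜ, maxS T h N x ∂μ
        = ∫ x, maxS T h N x ∂μ := integral_add_compl (hEmeas N) hMint
    have h6 : ∫ x in (E N)ᶜ, maxS T h N x ∂μ = 0 := by
      refine setIntegral_eq_zero_of_forall_eq_zero fun x hx => ?_
      refine maxS_nonpos T h N x fun k hk1 hkN => ?_
      by_contra hpos
      exact hx ⟨k, hk1, hkN, lt_of_not_ge hpos⟩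
    linarith
  -- step B : limit
  have hmono : Monotone E := by
    intro a b hab x ⟨k, hk1, hka, hkpos⟩
    exact ⟨k, hk1, hka.trans hab, hkpos⟩
  have hunion : (⋃ N, E N) = {x | ∃ n, 1 ≤ n ∧ 0 < birkhoffSum T h n x} := by
    ext x
    constructor
    · rintro ⟨s, ⟨N, rfl⟩, k, hk1, _, hkpos⟩
      exact ⟨k, hk1, hkpos⟩
    · rintro ⟨n, hn1, hnpos⟩
      exact ⟨E n, ⟨n, rfl⟩, n, hn1, le_rfl, hnpos⟩
  have htend := MeasureTheory.tendsto_setIntegral_of_monotone hEmeas hmono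
    (hint.integrableOn : IntegrableOn h (⋃ N, E N) μ)
  rw [hunion] at htend
  exact ge_of_tendsto htend (Filter.Eventually.of_forall stepA)

end Garsia2
section Hopf
variable {X : Type*} [MeasurableSpace X]

lemma measurable_birkhoffAvg {T : X → X} (hTm : Measurable T) {g : X → ℝ} (hgm : Measurable g)
    (n : ℕ) : Measurable (birkhoffAvg T g n) := by
  unfold birkhoffAvg
  exact (measurable_birkhoffSum hTm hgm n).const_mul _

lemma measurableSet_maxSet {T : X → X} (hTm : Measurable T) {g : X → ℝ} (hgm : Measurable g)
    (lam : ℝ) : MeasurableSet {x | ∃ n, 1 ≤ n ∧ lam < birkhoffAvg T g n x} := by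
  have : {x | ∃ n, 1 ≤ n ∧ lam < birkhoffAvg T g n x}
      = ⋃ n, {x | 1 ≤ n ∧ lam < birkhoffAvg T g n x} := by
    ext x; simp
  rw [this]
  refine MeasurableSet.iUnion fun n => ?_
  rcases Classical.em (1 ≤ n) with hn | hn
  · simp only [hn, true_and]
    exact measurableSet_lt measurable_const (measurable_birkhoffAvg hTm hgm n)
  · simp only [hn, false_and]; exact MeasurableSet.empty

lemma hopf {μ : Measure X} [IsProbabilityMeasure μ] {T : X → X}
    (hT : MeasurePreserving T μ μ) {g : X → ℝ} (hgm : Measurable g) (hgint : Integrable g μ)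
    {lam : ℝ} (hlam : 0 < lam) :
    lam * (μ {x | ∃ n, 1 ≤ n ∧ lam < birkhoffAvg T g n x}).toReal
      ≤ ∫ x in {x | ∃ n, 1 ≤ n ∧ lam < birkhoffAvg T g n x}, g x ∂μ := by
  set E := {x | ∃ n, 1 ≤ n ∧ lam < birkhoffAvg T g n x} with hEdef
  have hEm : MeasurableSet E := measurableSet_maxSet hT.measurable hgm lam
  have hm : Measurable (fun x => g x - lam) := hgm.sub measurable_const
  have hint : Integrable (fun x => g x - lam) μ := hgint.sub (integrable_const lam)
  have hsum : ∀ n x, birkhoffSum T (fun y => g y - lam) n x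
      = birkhoffSum T g n x - n * lam := by
    intro n x
    unfold birkhoffSum
    rw [Finset.sum_sub_distrib, Finset.sum_const, Finset.card_range, nsmul_eq_mul]
  have hset : {x | ∃ n, 1 ≤ n ∧ 0 < birkhoffSum T (fun y => g y - lam) n x} = E := by
    ext x
    simp only [hEdef, Set.mem_setOf_eq, hsum]
    constructor
    · rintro ⟨n, hn1, hpos⟩
      refine ⟨n, hn1, ?_⟩
      have hn : (0:ℝ) < n := by exact_mod_cast hn1
      unfold birkhoffAvg
      rw [inv_mul_eq_div, lt_div_iff₀ hn]
      unfold birkhoffSum at hpos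
      nlinarith [hpos]
    · rintro ⟨n, hn1, hlt⟩
      refine ⟨n, hn1, ?_⟩
      have hn : (0:ℝ) < n := by exact_mod_cast hn1
      unfold birkhoffAvg at hlt
      rw [inv_mul_eq_div, lt_div_iff₀ hn] at hlt
      unfold birkhoffSum
      nlinarith [hlt]
  have := garsia hT hm hint
  rw [hset] at this
  have hsplit : ∫ x in E, (g x - lam) ∂μ = ∫ x in E, g x ∂μ - ∫ x in E, (lam : ℝ) ∂μ :=
    integral_sub hgint.integrableOn (integrable_const lam).integrableOn
  rw [hsplit, setIntegral_const] at this
  have : (μ E).toReal * lam ≤ ∫ x in E, g x ∂μ := by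
    have h' : μ.real E * lam ≤ ∫ x in E, g x ∂μ := by simpa [smul_eq_mul] using this
    exact h'
  linarith [this]

end Hopf
section Compare
variable {X : Type*}

/-- Key identity: `S_n (A_p f) x = p⁻¹ ∑_{j<p} (S_{j+n} f x - S_j f x)`. -/
lemma birkhoffSum_avg_eq (T : X → X) (f : X → ℝ) (p n : ℕ) (x : X) :
    birkhoffSum T (birkhoffAvg T f p) n x
      = (p : ℝ)⁻¹ * ∑ j ∈ Finset.range p,
          (birkhoffSum T f (j + n) x - birkhoffSum T f j x) := by
  unfold birkhoffSum birkhoffAvg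
  have h1 : ∀ i, (p:ℝ)⁻¹ * ∑ j ∈ Finset.range p, f (T^[j] (T^[i] x))
      = (p:ℝ)⁻¹ * ∑ j ∈ Finset.range p, f (T^[j + i] x) := by
    intro i
    congr 1
    exact Finset.sum_congr rfl fun j _ => by rw [Function.iterate_add_apply]
  calc ∑ i ∈ Finset.range n, (p:ℝ)⁻¹ * ∑ j ∈ Finset.range p, f (T^[j] (T^[i] x))
      = (p:ℝ)⁻¹ * ∑ i ∈ Finset.range n, ∑ j ∈ Finset.range p, f (T^[j + i] x) := by
        rw [Finset.mul_sum]; exact Finset.sum_congr rfl fun i _ => h1 i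
    _ = (p:ℝ)⁻¹ * ∑ j ∈ Finset.range p, ∑ i ∈ Finset.range n, f (T^[j + i] x) := by
        rw [Finset.sum_comm]
    _ = (p:ℝ)⁻¹ * ∑ j ∈ Finset.range p,
          (∑ k ∈ Finset.range (j + n), f (T^[k] x) - ∑ k ∈ Finset.range j, f (T^[k] x)) := by
        congr 1
        refine Finset.sum_congr rfl fun j _ => ?_
        rw [Finset.sum_range_add (fun k => f (T^[k] x)) j n]
        ring

lemma avg_close (T : X → X) (f : X → ℝ) (C : ℝ) {p : ℕ} (hp : 1 ≤ p) (n : ℕ) (x : X)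
    (hG : ∀ i, |f (T^[i] x)| ≤ C) :
    |birkhoffAvg T f n x - birkhoffAvg T (birkhoffAvg T f p) n x|
      ≤ (n : ℝ)⁻¹ * (2 * ((p : ℝ) - 1) * C) := by
  have hC : 0 ≤ C := le_trans (abs_nonneg _) (hG 0)
  have hSdiff : ∀ j < p, |birkhoffSum T f n x
      - (birkhoffSum T f (j + n) x - birkhoffSum T f j x)| ≤ 2 * ((p : ℝ) - 1) * C := by
    intro j hj
    have hjC : (j : ℝ) ≤ (p : ℝ) - 1 := by
      have : (j : ℝ) + 1 ≤ (p : ℝ) := by exact_mod_cast hj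
      linarith
    have h1 : |birkhoffSum T f (j + n) x - birkhoffSum T f n x| ≤ (j : ℝ) * C := by
      unfold birkhoffSum
      rw [add_comm j n, Finset.sum_range_add (fun k => f (T^[k] x)) n j, add_sub_cancel_left]
      calc |∑ i ∈ Finset.range j, f (T^[n + i] x)|
          ≤ ∑ i ∈ Finset.range j, |f (T^[n + i] x)| := Finset.abs_sum_le_sum_abs _ _
        _ ≤ ∑ _i ∈ Finset.range j, C := Finset.sum_le_sum fun i _ => hG (n + i)
        _ = (j : ℝ) * C := by rw [Finset.sum_const, Finset.card_range, nsmul_eq_mul]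
    have h2 : |birkhoffSum T f j x| ≤ (j : ℝ) * C := by
      unfold birkhoffSum
      calc |∑ i ∈ Finset.range j, f (T^[i] x)|
          ≤ ∑ i ∈ Finset.range j, |f (T^[i] x)| := Finset.abs_sum_le_sum_abs _ _
        _ ≤ ∑ _i ∈ Finset.range j, C := Finset.sum_le_sum fun i _ => hG i
        _ = (j : ℝ) * C := by rw [Finset.sum_const, Finset.card_range, nsmul_eq_mul]
    have : |birkhoffSum T f n x - (birkhoffSum T f (j + n) x - birkhoffSum T f j x)|
        ≤ |birkhoffSum T f (j + n) x - birkhoffSum T f n x| + |birkhoffSum T f j x| := by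
      have := abs_sub (birkhoffSum T f (j + n) x - birkhoffSum T f n x) (birkhoffSum T f j x)
      rw [abs_sub_comm]
      calc |birkhoffSum T f (j + n) x - birkhoffSum T f j x - birkhoffSum T f n x|
          = |(birkhoffSum T f (j + n) x - birkhoffSum T f n x) + (- birkhoffSum T f j x)| := by
            ring_nf
        _ ≤ |birkhoffSum T f (j + n) x - birkhoffSum T f n x| + |(- birkhoffSum T f j x)| :=
            abs_add_le _ _
        _ = |birkhoffSum T f (j + n) x - birkhoffSum T f n x| + |birkhoffSum T f j x| := by
            rw [abs_neg]
    nlinarith [h1, h2, hC]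
  have hp0 : (0:ℝ) < (p : ℝ) := by exact_mod_cast hp
  -- main bound on the sums
  have hmain : |birkhoffSum T f n x - birkhoffSum T (birkhoffAvg T f p) n x|
      ≤ 2 * ((p : ℝ) - 1) * C := by
    rw [birkhoffSum_avg_eq]
    have hrw : birkhoffSum T f n x - (p:ℝ)⁻¹ * ∑ j ∈ Finset.range p,
        (birkhoffSum T f (j + n) x - birkhoffSum T f j x)
        = (p:ℝ)⁻¹ * ∑ j ∈ Finset.range p,
            (birkhoffSum T f n x - (birkhoffSum T f (j + n) x - birkhoffSum T f j x)) := by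
      have hs : ∑ j ∈ Finset.range p,
          (birkhoffSum T f n x - (birkhoffSum T f (j + n) x - birkhoffSum T f j x))
          = (p : ℝ) * birkhoffSum T f n x - ∑ j ∈ Finset.range p,
              (birkhoffSum T f (j + n) x - birkhoffSum T f j x) := by
        rw [Finset.sum_sub_distrib, Finset.sum_const, Finset.card_range, nsmul_eq_mul]
      rw [hs, mul_sub, ← mul_assoc, inv_mul_cancel₀ (ne_of_gt hp0), one_mul]
    rw [hrw, abs_mul, abs_inv, Nat.abs_cast]
    calc (p:ℝ)⁻¹ * |∑ j ∈ Finset.range p,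
            (birkhoffSum T f n x - (birkhoffSum T f (j + n) x - birkhoffSum T f j x))|
        ≤ (p:ℝ)⁻¹ * ∑ j ∈ Finset.range p,
            |birkhoffSum T f n x - (birkhoffSum T f (j + n) x - birkhoffSum T f j x)| := by
          exact mul_le_mul_of_nonneg_left (Finset.abs_sum_le_sum_abs _ _)
            (inv_nonneg.mpr hp0.le)
      _ ≤ (p:ℝ)⁻¹ * ∑ _j ∈ Finset.range p, (2 * ((p : ℝ) - 1) * C) := by
          exact mul_le_mul_of_nonneg_left
            (Finset.sum_le_sum fun j hj => hSdiff j (Finset.mem_range.mp hj))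
            (inv_nonneg.mpr hp0.le)
      _ = 2 * ((p : ℝ) - 1) * C := by
          rw [Finset.sum_const, Finset.card_range, nsmul_eq_mul, ← mul_assoc,
            inv_mul_cancel₀ (ne_of_gt hp0), one_mul]
  have : birkhoffAvg T f n x - birkhoffAvg T (birkhoffAvg T f p) n x
      = (n : ℝ)⁻¹ * (birkhoffSum T f n x - birkhoffSum T (birkhoffAvg T f p) n x) := by
    unfold birkhoffAvg birkhoffSum
    ring
  rw [this, abs_mul, abs_inv, Nat.abs_cast]
  exact mul_le_mul_of_nonneg_left hmain (inv_nonneg.mpr (Nat.cast_nonneg n))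

end Compare
/-- Effective a.s. convergence for bounded observables: if `‖A_p f‖₁ ≤ δε/2` and
`n₀ ≥ 4(p-1)C/δ`, then `μ{x : ∃ n ≥ n₀, |Aₙ f x| > δ} ≤ ε`. -/
theorem birkhoff_effective_as_convergence_bounded {X : Type*} [MeasurableSpace X]
    (μ : Measure X) [IsProbabilityMeasure μ]
    (T : X → X) (hT : MeasurePreserving T μ μ)
    (f : X → ℝ) (hfm : Measurable f) (C : ℝ) (hfC : ∀ᵐ x ∂μ, |f x| ≤ C)
    (ε δ : ℝ) (hε : 0 < ε) (hδ : 0 < δ)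
    (p : ℕ) (hp : 1 ≤ p) (hAp : ∫ x, |birkhoffAvg T f p x| ∂μ ≤ δ * ε / 2)
    (n₀ : ℕ) (hn₀ : 1 ≤ n₀) (hn₀C : 4 * ((p : ℝ) - 1) * C / δ ≤ (n₀ : ℝ)) :
    μ {x | ∃ n, n₀ ≤ n ∧ δ < |birkhoffAvg T f n x|} ≤ ENNReal.ofReal ε := by
  set g : X → ℝ := birkhoffAvg T f p with hgdef
  have hgm : Measurable g := measurable_birkhoffAvg hT.measurable hfm p
  have hf_int : Integrable f μ := by
    refine Integrable.mono' (integrable_const C) hfm.aestronglyMeasurable ?_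
    filter_upwards [hfC] with x hx
    simpa [Real.norm_eq_abs] using hx
  have hg_int : Integrable g μ := by
    have : Integrable (birkhoffSum T f p) μ := integrable_birkhoffSum hT hfm hf_int p
    exact this.const_mul _
  have hδ2 : (0:ℝ) < δ / 2 := by linarith
  set Ep := {x | ∃ n, 1 ≤ n ∧ δ / 2 < birkhoffAvg T g n x} with hEp
  set En := {x | ∃ n, 1 ≤ n ∧ δ / 2 < birkhoffAvg T (fun y => -g y) n x} with hEn
  have hEpm : MeasurableSet Ep := measurableSet_maxSet hT.measurable hgm _
  have hEnm : MeasurableSet En := measurableSet_maxSet hT.measurable hgm.neg _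
  have hopfP := hopf hT hgm hg_int hδ2
  have hopfN := hopf hT (hgm.neg) (hg_int.neg) hδ2
  -- bound the right-hand sides by positive/negative parts
  have hPosInt : Integrable (fun x => max (g x) 0) μ := hg_int.pos_part
  have hNegInt : Integrable (fun x => max (-g x) 0) μ := hg_int.neg.pos_part
  have hP1 : ∫ x in Ep, g x ∂μ ≤ ∫ x, max (g x) 0 ∂μ :=
    le_trans (setIntegral_mono_on hg_int.integrableOn hPosInt.integrableOn hEpm
        fun x _ => le_max_left _ _)
      (setIntegral_le_integral hPosInt (Filter.Eventually.of_forall fun x => le_max_right _ _))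
  have hN1 : ∫ x in En, -g x ∂μ ≤ ∫ x, max (-g x) 0 ∂μ :=
    le_trans (setIntegral_mono_on hg_int.neg.integrableOn hNegInt.integrableOn hEnm
        fun x _ => le_max_left _ _)
      (setIntegral_le_integral hNegInt (Filter.Eventually.of_forall fun x => le_max_right _ _))
  have habs_split : ∫ x, max (g x) 0 ∂μ + ∫ x, max (-g x) 0 ∂μ = ∫ x, |g x| ∂μ := by
    rw [← integral_add hPosInt hNegInt]
    exact integral_congr_ae (Filter.Eventually.of_forall fun x => by
      simpa using max_zero_add_max_neg_zero_eq_abs_self (g x))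
  have hreal : (μ Ep).toReal + (μ En).toReal ≤ ε := by
    have h1 : δ / 2 * (μ Ep).toReal + δ / 2 * (μ En).toReal ≤ δ * ε / 2 := by
      have hP : δ / 2 * (μ Ep).toReal ≤ ∫ x in Ep, g x ∂μ := hopfP
      have hN : δ / 2 * (μ En).toReal ≤ ∫ x in En, -g x ∂μ := hopfN
      have := hAp
      rw [hgdef] at *
      linarith [hP, hN, hP1, hN1, habs_split, hAp]
    have h2 : δ / 2 * ((μ Ep).toReal + (μ En).toReal) ≤ δ / 2 * ε := by linarith
    exact le_of_mul_le_mul_left h2 hδ2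
  -- a.e. inclusion of the target set in Ep ∪ En
  have hGae : ∀ᵐ x ∂μ, ∀ i, |f (T^[i] x)| ≤ C := by
    rw [MeasureTheory.ae_all_iff]
    intro i
    have hms : MeasurableSet {y : X | |f y| ≤ C} :=
      measurableSet_le hfm.abs measurable_const
    have hmap : ∀ᵐ y ∂(Measure.map (T^[i]) μ), |f y| ≤ C := by
      rw [(hT.iterate i).map_eq]; exact hfC
    exact (MeasureTheory.ae_map_iff (hT.measurable.iterate i).aemeasurable hms).mp hmap
  have hsub : ∀ᵐ x ∂μ, x ∈ {x : X | ∃ n, n₀ ≤ n ∧ δ < |birkhoffAvg T f n x|} → x ∈ Ep ∪ En := by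
    filter_upwards [hGae] with x hGx htarget
    obtain ⟨n, hn, habs⟩ := htarget
    have hn1 : 1 ≤ n := le_trans hn₀ hn
    have hnpos : (0:ℝ) < (n:ℝ) := by exact_mod_cast hn1
    have key := avg_close T f C hp n x hGx
    have hC0 : 0 ≤ C := le_trans (abs_nonneg _) (hGx 0)
    have hp1 : (1:ℝ) ≤ (p:ℝ) := by exact_mod_cast hp
    have hcast : (n₀:ℝ) ≤ (n:ℝ) := by exact_mod_cast hn
    have hn₀C' : 4 * ((p : ℝ) - 1) * C ≤ (n₀:ℝ) * δ := by
      rw [div_le_iff₀ hδ] at hn₀C; exact hn₀C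
    have h4 : 2 * ((p : ℝ) - 1) * C ≤ δ / 2 * (n:ℝ) := by nlinarith
    have hinv : (0:ℝ) ≤ ((n:ℝ))⁻¹ := inv_nonneg.mpr hnpos.le
    have hsmall : ((n:ℝ))⁻¹ * (2 * ((p : ℝ) - 1) * C) ≤ δ / 2 := by
      calc ((n:ℝ))⁻¹ * (2 * ((p : ℝ) - 1) * C) ≤ ((n:ℝ))⁻¹ * (δ / 2 * (n:ℝ)) :=
            mul_le_mul_of_nonneg_left h4 hinv
        _ = δ / 2 * (((n:ℝ))⁻¹ * (n:ℝ)) := by ring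
        _ = δ / 2 := by rw [inv_mul_cancel₀ hnpos.ne', mul_one]
    have hclose : |birkhoffAvg T f n x - birkhoffAvg T g n x| ≤ δ / 2 := le_trans key hsmall
    have hgabs : δ / 2 < |birkhoffAvg T g n x| := by
      have := abs_sub_abs_le_abs_sub (birkhoffAvg T f n x) (birkhoffAvg T g n x)
      linarith
    rcases lt_abs.mp hgabs with hpos | hneg
    · exact Or.inl ⟨n, hn1, hpos⟩
    · refine Or.inr ⟨n, hn1, ?_⟩
      have : birkhoffAvg T (fun y => -g y) n x = - birkhoffAvg T g n x := by
        unfold birkhoffAvg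
        rw [Finset.sum_neg_distrib]; ring
      rw [this]; exact hneg
  calc μ {x | ∃ n, n₀ ≤ n ∧ δ < |birkhoffAvg T f n x|}
      ≤ μ (Ep ∪ En) := measure_mono_ae hsub
    _ ≤ μ Ep + μ En := measure_union_le _ _
    _ = ENNReal.ofReal ((μ Ep).toReal + (μ En).toReal) := by
        rw [ENNReal.ofReal_add ENNReal.toReal_nonneg ENNReal.toReal_nonneg,
          ENNReal.ofReal_toReal (measure_ne_top μ _), ENNReal.ofReal_toReal (measure_ne_top μ _)]
    _ ≤ ENNReal.ofReal ε := ENNReal.ofReal_le_ofReal hreal
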